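/- Let β > 1. A word (ω_1,…,ω_n) with digits in {0,1,…,⌈β⌉} is admissible (i.e., is the digit prefix of the β-expansion of some x ∈ [0,1)) if and only if for every 0 ≤ j < n, the shifted word (ω_{j+1},…,ω_n) is lexicographically ≤ (ε*_1(β),…,ε*_{n-j}(β)), where ε*(β) is the infinite β-expansion of 1. -/

import Mathlib

open Filter MeasureTheory Set

noncomputable def betaT (β : ℝ) (x : ℝ) : ℝ := β * x - ⌊β * x⌋

noncomputable def eps (β x : ℝ) (n : ℕ) : ℤ := ⌊β * (betaT β)^[n - 1] x⌋

noncomputable def runLen (β x : ℝ) (n : ℕ) : ℕ :=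
  sSup {j | ∃ i, i + j ≤ n ∧ ∀ k < j, eps β x (i + k + 1) = 0}

def isAdmissible (β : ℝ) (n : ℕ) (ω : ℕ → ℤ) : Prop :=
  ∃ x ∈ Set.Ico (0 : ℝ) 1, ∀ k < n, eps β x (k + 1) = ω k

def cylinder (β : ℝ) (n : ℕ) (ω : ℕ → ℤ) : Set ℝ :=
  {x | x ∈ Set.Ico (0 : ℝ) 1 ∧ ∀ k < n, eps β x (k + 1) = ω k}

def isFull (β : ℝ) (n : ℕ) (ω : ℕ → ℤ) : Prop :=
  MeasureTheory.volume (cylinder β n ω) = ENNReal.ofReal (β ^ (-(n : ℤ)))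

open Classical in
noncomputable def epsStar (β : ℝ) : ℕ → ℤ :=
  if h : ∃ m, 1 ≤ m ∧ eps β 1 m ≠ 0 ∧ ∀ k, m < k → eps β 1 k = 0 then
    fun n =>
      if (n - 1) % Nat.find h + 1 = Nat.find h then eps β 1 (Nat.find h) - 1
      else eps β 1 ((n - 1) % Nat.find h + 1)
  else eps β 1

def lexLt (u v : ℕ → ℤ) : Prop := ∃ j, (∀ k < j, u k = v k) ∧ u j < v j

def lexLe (u v : ℕ → ℤ) : Prop := lexLt u v ∨ u = v

noncomputable def vbeta (β x : ℝ) : ℝ :=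
  sSup {v | 0 ≤ v ∧ ∃ᶠ n : ℕ in atTop, (betaT β)^[n] x ≤ β ^ (-((n : ℝ) * v))}

noncomputable def hatv (β x : ℝ) : ℝ :=
  sSup {v | 0 ≤ v ∧ ∀ᶠ N : ℕ in atTop, ∃ n, 1 ≤ n ∧ n ≤ N ∧ (betaT β)^[n] x ≤ β ^ (-(v * (N : ℝ)))}


noncomputable def val (β : ℝ) : ℕ → (ℕ → ℤ) → ℝ
  | 0, _ => 0
  | m+1, w => ((w 0 : ℝ) + val β m (fun k => w (k+1))) / β

lemma betaT_mem (β x : ℝ) : betaT β x ∈ Set.Ico (0:ℝ) 1 := by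
  have : betaT β x = Int.fract (β * x) := rfl
  rw [this]
  exact ⟨Int.fract_nonneg _, Int.fract_lt_one _⟩

lemma betaT_zero (β : ℝ) : betaT β 0 = 0 := by simp [betaT]

lemma iter_mem (β x : ℝ) (m : ℕ) : (betaT β)^[m+1] x ∈ Set.Ico (0:ℝ) 1 := by
  rw [Function.iterate_succ_apply']; exact betaT_mem _ _

lemma iter_mem' (β x : ℝ) (hx : x ∈ Set.Ico (0:ℝ) 1) (m : ℕ) :
    (betaT β)^[m] x ∈ Set.Ico (0:ℝ) 1 := by
  cases m with
  | zero => simpa using hx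
  | succ m => exact iter_mem β x m

lemma eps_one_def (β x : ℝ) : eps β x 1 = ⌊β * x⌋ := by simp [eps]

lemma eps_succ (β x : ℝ) (n : ℕ) : eps β x (n+2) = eps β (betaT β x) (n+1) := by
  simp [eps, Function.iterate_succ_apply]

lemma eps_shift (β x : ℝ) (j k : ℕ) :
    eps β ((betaT β)^[j] x) (k+1) = eps β x (j+k+1) := by
  simp only [eps, Nat.add_sub_cancel]
  rw [← Function.iterate_add_apply, Nat.add_comm]

lemma val_congr {β : ℝ} : ∀ {m : ℕ} {w w' : ℕ → ℤ}, (∀ k < m, w k = w' k) →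
    val β m w = val β m w' := by
  intro m
  induction m with
  | zero => intro w w' _; rfl
  | succ m ih =>
    intro w w' h
    show ((w 0 : ℝ) + val β m fun k => w (k+1)) / β = ((w' 0 : ℝ) + val β m fun k => w' (k+1)) / β
    rw [h 0 (Nat.succ_pos _), ih (fun k hk => h (k+1) (by omega))]

lemma val_nonneg {β : ℝ} (hβ : 0 < β) : ∀ {m : ℕ} {w : ℕ → ℤ}, (∀ k < m, 0 ≤ w k) →
    0 ≤ val β m w := by
  intro m
  induction m with
  | zero => intro w _; exact le_refl 0
  | succ m ih =>
    intro w h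
    show 0 ≤ ((w 0 : ℝ) + val β m fun k => w (k+1)) / β
    have h0 : (0:ℝ) ≤ w 0 := by exact_mod_cast h 0 (Nat.succ_pos _)
    have := ih (fun k hk => h (k+1) (by omega))
    positivity

lemma val_split {β : ℝ} : ∀ (a b : ℕ) (w : ℕ → ℤ),
    val β (a+b) w = val β a w + val β b (fun k => w (a+k)) / β^a := by
  intro a
  induction a with
  | zero =>
    intro b w
    simp only [Nat.zero_add, val, pow_zero, div_one, zero_add]
  | succ a ih =>
    intro b w
    have h1 : a + 1 + b = (a + b) + 1 := by omega
    rw [h1]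
    show ((w 0 : ℝ) + val β (a+b) fun k => w (k+1)) / β = _
    rw [ih b (fun k => w (k+1))]
    show _ = ((w 0 : ℝ) + val β a fun k => w (k+1)) / β + val β b (fun k => w (a+1+k)) / β^(a+1)
    have h2 : (fun k => w (a + k + 1)) = (fun k => w (a+1+k)) := by
      funext k; congr 1; omega
    rw [h2]
    have hb : (β:ℝ) ^ (a+1) = β^a * β := pow_succ β a
    by_cases hβ : β = 0
    · simp [hβ]
    · field_simp
      ring

lemma val_one_def {β : ℝ} (w : ℕ → ℤ) : val β 1 w = (w 0 : ℝ) / β := by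
  show ((w 0 : ℝ) + val β 0 fun k => w (k+1)) / β = _
  simp [val]

lemma val_succ_last {β : ℝ} (m : ℕ) (w : ℕ → ℤ) :
    val β (m+1) w = val β m w + (w m : ℝ) / β^(m+1) := by
  rw [val_split m 1 w, val_one_def]
  by_cases hβ : β = 0
  · simp [hβ]
  · rw [pow_succ]
    field_simp
    ring

lemma val_zero_word {β : ℝ} : ∀ (m : ℕ), val β m (fun _ => 0) = 0 := by
  intro m; induction m with
  | zero => rfl
  | succ m ih => show ((0:ℤ) + val β m fun _ => (0:ℤ)) / β = 0; rw [ih]; simp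

lemma expansion {β : ℝ} (hβ : 0 < β) : ∀ (m : ℕ) (x : ℝ),
    x = val β m (fun k => eps β x (k+1)) + (betaT β)^[m] x / β^m := by
  intro m
  induction m with
  | zero => intro x; simp [val]
  | succ m ih =>
    intro x
    have h1 : x = ((eps β x 1 : ℝ) + betaT β x) / β := by
      rw [eps_one_def]
      simp [betaT]
      field_simp
    have h2 := ih (betaT β x)
    have h3 : (fun k => eps β (betaT β x) (k+1)) = fun k => eps β x (k+2) := by
      funext k; rw [eps_succ]
    rw [h3] at h2
    show x = ((eps β x 1 : ℝ) + val β m fun k => eps β x (k+1+1)) / β + (betaT β)^[m+1] x / β^(m+1)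
    rw [Function.iterate_succ_apply, pow_succ]
    calc x = ((eps β x 1 : ℝ) + betaT β x) / β := h1
    _ = ((eps β x 1 : ℝ) + (val β m (fun k => eps β x (k+2)) + (betaT β)^[m] (betaT β x) / β^m)) / β := by rw [← h2]
    _ = _ := by field_simp; ring

lemma digits_vanish {β : ℝ} (i : ℕ) (hi : (betaT β)^[i] 1 = 0) :
    ∀ k, i < k → eps β 1 k = 0 := by
  intro k hk
  have h1 : (betaT β)^[k-1] 1 = 0 := by
    rw [show k - 1 = (k-1-i) + i by omega, Function.iterate_add_apply, hi,
      Function.iterate_fixed (betaT_zero β) _]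
  simp [eps, h1]

lemma zero_of_digits_zero {β : ℝ} (hβ : 1 < β) (x : ℝ) (hx : x ∈ Set.Ico (0:ℝ) 1)
    (h : ∀ k, eps β x (k+1) = 0) : x = 0 := by
  have hβ0 : (0:ℝ) < β := lt_trans one_pos hβ
  have hle : ∀ m : ℕ, x ≤ (1/β)^m := by
    intro m
    have h1 := expansion hβ0 m x
    have h2 : val β m (fun k => eps β x (k+1)) = 0 := by
      rw [val_congr (w' := fun _ => 0) (fun k _ => h k)]; exact val_zero_word m
    have h3 : (betaT β)^[m] x ≤ 1 := (iter_mem' β x hx m).2.le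
    have h4 : (0:ℝ) < β^m := by positivity
    rw [h2, zero_add] at h1
    rw [h1, div_pow, one_pow]
    gcongr
  have htend : Filter.Tendsto (fun m : ℕ => (1/β)^m) Filter.atTop (nhds 0) := by
    apply tendsto_pow_atTop_nhds_zero_of_lt_one (by positivity)
    rw [div_lt_one hβ0]; linarith
  have : x ≤ 0 := ge_of_tendsto' htend hle
  linarith [hx.1]

lemma expansion_one {β : ℝ} (hβ0 : 0 < β) (m : ℕ) :
    val β m (fun k => eps β 1 (k+1)) = 1 - (betaT β)^[m] 1 / β^m := by
  have := expansion hβ0 m 1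
  linarith

lemma iter_one_le {β : ℝ} (m : ℕ) : (betaT β)^[m] 1 ≤ 1 := by
  cases m with
  | zero => simp
  | succ m => exact (iter_mem β 1 m).2.le

lemma iter_one_pos_of_digit {β : ℝ} (i k : ℕ) (hk : i < k) (hne : eps β 1 k ≠ 0) :
    0 < (betaT β)^[i] 1 := by
  rcases lt_or_eq_of_le (match i with
    | 0 => by norm_num
    | (m+1) => (iter_mem β 1 m).1 : (0:ℝ) ≤ (betaT β)^[i] 1) with h | h
  · exact h
  · exact absurd (digits_vanish i h.symm k hk) hne

lemma eps_one_one {β : ℝ} (hβ : 1 < β) : 1 ≤ eps β 1 1 := by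
  rw [eps_one_def, mul_one]
  exact_mod_cast Int.le_floor.mpr (by exact_mod_cast hβ.le)

lemma Estar {β : ℝ} (hβ : 1 < β) (i : ℕ) :
    1 - 1/β^i ≤ val β i (fun k => epsStar β (k+1)) ∧
      val β i (fun k => epsStar β (k+1)) < 1 := by
  classical
  have hβ0 : (0:ℝ) < β := lt_trans one_pos hβ
  by_cases h : ∃ m, 1 ≤ m ∧ eps β 1 m ≠ 0 ∧ ∀ k, m < k → eps β 1 k = 0
  · -- simple Parry case
    obtain ⟨hp1, hp2, hp3⟩ := Nat.find_spec h
    set p := Nat.find h with hp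
    have hstar : epsStar β = fun n =>
        if (n - 1) % p + 1 = p then eps β 1 p - 1 else eps β 1 ((n - 1) % p + 1) := by
      rw [epsStar, dif_pos h]
    clear_value p
    -- T^[p] 1 = 0
    have hTp : (betaT β)^[p] 1 = 0 := by
      obtain ⟨p', rfl⟩ : ∃ p', p = p' + 1 := ⟨p - 1, by omega⟩
      apply zero_of_digits_zero hβ _ (iter_mem β 1 p')
      intro k
      rw [eps_shift]
      exact hp3 _ (by omega)
    have hTpos : ∀ i < p, 0 < (betaT β)^[i] 1 :=
      fun i hi => iter_one_pos_of_digit i p hi hp2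
    have dsmall : ∀ k, k + 1 < p → epsStar β (k+1) = eps β 1 (k+1) := by
      intro k hk
      rw [hstar]
      simp only [Nat.add_sub_cancel]
      rw [Nat.mod_eq_of_lt (by omega), if_neg (by omega)]
    have dperiod : ∀ k, epsStar β (p + k + 1) = epsStar β (k+1) := by
      intro k
      rw [hstar]
      simp only [Nat.add_sub_cancel]
      rw [show p + k = k + p by omega, Nat.add_mod_right]
    -- value of first p digits of epsStar
    have hEp : val β p (fun k => epsStar β (k+1)) = 1 - 1/β^p := by
      obtain ⟨p', hp'⟩ : ∃ p', p = p' + 1 := ⟨p - 1, by omega⟩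
      have h1 : val β p' (fun k => epsStar β (k+1)) = val β p' (fun k => eps β 1 (k+1)) :=
        val_congr (fun k hk => dsmall k (by omega))
      have h2 : epsStar β (p' + 1) = eps β 1 p - 1 := by
        rw [hstar]
        simp only [Nat.add_sub_cancel]
        rw [Nat.mod_eq_of_lt (by omega), if_pos (by omega)]
      have h3 : val β p (fun k => eps β 1 (k+1)) = 1 := by
        rw [expansion_one hβ0 p, hTp]; simp
      have h4 : val β p (fun k => eps β 1 (k+1)) =
          val β p' (fun k => eps β 1 (k+1)) + ((eps β 1 p : ℤ) : ℝ)/β^p := by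
        rw [hp']; exact val_succ_last _ _
      have hA : val β p (fun k => epsStar β (k+1)) =
          val β p' (fun k => epsStar β (k+1)) + ((epsStar β (p'+1) : ℤ) : ℝ)/β^p := by
        rw [hp']; exact val_succ_last _ _
      have h6 : val β p' (fun k => eps β 1 (k+1)) = 1 - ((eps β 1 p : ℤ):ℝ)/β^p := by
        rw [h4] at h3; linarith
      have h2' : ((epsStar β (p'+1) : ℤ) : ℝ) = ((eps β 1 p : ℤ):ℝ) - 1 := by
        rw [h2]; push_cast; ring
      rw [hA, h1, h6, h2']
      ring
    -- main claim by strong induction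
    induction i using Nat.strong_induction_on with
    | _ i ih =>
      rcases lt_or_ge i p with hi | hi
      · have h1 : val β i (fun k => epsStar β (k+1)) = val β i (fun k => eps β 1 (k+1)) :=
          val_congr (fun k hk => dsmall k (by omega))
        rw [h1, expansion_one hβ0]
        have hpos : 0 < (betaT β)^[i] 1 := hTpos i hi
        have hle : (betaT β)^[i] 1 ≤ 1 := iter_one_le i
        have hpow : (0:ℝ) < β^i := by positivity
        constructor
        · have : (betaT β)^[i] 1 / β^i ≤ 1/β^i := by gcongr
          linarith
        · have : 0 < (betaT β)^[i] 1 / β^i := by positivity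
          linarith
      · obtain ⟨i', rfl⟩ : ∃ i', i = p + i' := ⟨i - p, by omega⟩
        rw [val_split]
        have hfun : (fun k => epsStar β ((fun k => k + 1) (p + k))) = fun k => epsStar β (k+1) := by
          funext k
          exact dperiod k
        have hsh : val β i' (fun k => (fun j => epsStar β (j+1)) (p + k)) =
            val β i' (fun k => epsStar β (k+1)) :=
          val_congr (fun k _ => dperiod k)
        rw [hsh, hEp]
        have hIH := ih i' (by omega)
        have hpow : (0:ℝ) < β^p := by positivity
        have hpow' : (0:ℝ) < β^i' := by positivity
        have hpa : β^(p+i') = β^p * β^i' := pow_add β p i'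
        constructor
        · have : (1 - 1/β^i')/β^p ≤ val β i' (fun k => epsStar β (k+1)) / β^p := by
            gcongr
            exact hIH.1
          have heq : 1 - 1/β^(p+i') = (1 - 1/β^p) + (1 - 1/β^i')/β^p := by
            rw [hpa]; field_simp; ring
          linarith
        · have : val β i' (fun k => epsStar β (k+1)) / β^p < 1/β^p := by
            gcongr
            exact hIH.2
          have heq : (1:ℝ) = (1 - 1/β^p) + 1/β^p := by field_simp; ring
          linarith
  · -- non-simple case
    have hstar : epsStar β = eps β 1 := by rw [epsStar, dif_neg h]
    rw [hstar, expansion_one hβ0]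
    have hle : (betaT β)^[i] 1 ≤ 1 := iter_one_le i
    have hpos : 0 < (betaT β)^[i] 1 := by
      rcases Nat.eq_zero_or_pos i with rfl | hi
      · norm_num
      rcases lt_or_eq_of_le ((iter_mem β 1 (i-1)).1.trans_eq (by rw [Nat.sub_add_cancel hi]) :
          (0:ℝ) ≤ (betaT β)^[i] 1) with h' | h'
      · exact h'
      exfalso
      have hvan := digits_vanish i h'.symm
      -- construct the last nonzero digit index
      have hP1 : eps β 1 1 ≠ 0 := by have := eps_one_one hβ; omega
      set G := Nat.findGreatest (fun m => eps β 1 m ≠ 0) i with hG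
      have hG1 : 1 ≤ G := Nat.le_findGreatest (P := fun m => eps β 1 m ≠ 0) hi hP1
      have hPG : eps β 1 G ≠ 0 := Nat.findGreatest_spec (P := fun m => eps β 1 m ≠ 0) hi hP1
      apply h
      refine ⟨G, hG1, hPG, fun k hk => ?_⟩
      rcases le_or_gt k i with hki | hki
      · by_contra hne
        exact Nat.findGreatest_is_greatest (P := fun m => eps β 1 m ≠ 0) (hG ▸ hk) hki hne
      · exact hvan k hki
    have hpow : (0:ℝ) < β^i := by positivity
    constructor
    · have : (betaT β)^[i] 1 / β^i ≤ 1/β^i := by gcongr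
      linarith
    · have : 0 < (betaT β)^[i] 1 / β^i := by positivity
      linarith

lemma lemmaA {β : ℝ} (hβ : 1 < β) : ∀ (m : ℕ) (w : ℕ → ℤ),
    (∀ k < m, 0 ≤ w k) →
    (∀ j < m, lexLe (fun k => if k < m - j then w (j + k) else 0)
      (fun k => if k < m - j then epsStar β (k + 1) else 0)) →
    val β m w < 1 := by
  have hβ0 : (0:ℝ) < β := lt_trans one_pos hβ
  intro m
  induction m using Nat.strong_induction_on with
  | _ m ih =>
    intro w h0 hadm
    rcases Nat.eq_zero_or_pos m with rfl | hm
    · show (0:ℝ) < 1; norm_num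
    have h00 := hadm 0 hm
    simp only [Nat.sub_zero, Nat.zero_add] at h00
    rcases h00 with hlt | heq
    · obtain ⟨i, hpre, hi⟩ := hlt
      replace hi : (if i < m then w i else 0) < (if i < m then epsStar β (i+1) else 0) := hi
      replace hpre : ∀ k, k < i → (if k < m then w k else 0) = (if k < m then epsStar β (k+1) else 0) := hpre
      have him : i < m := by
        by_contra hc
        rw [if_neg (by omega), if_neg (by omega)] at hi
        omega
      rw [if_pos him, if_pos him] at hi
      have hpre' : ∀ k < i, w k = epsStar β (k+1) := by
        intro k hk
        have := hpre k hk
        rw [if_pos (by omega), if_pos (by omega)] at this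
        exact this
      -- split the value at position i
      have hsplit : val β m w = val β i w +
          ((w i : ℝ) + val β (m - i - 1) (fun k => w (i + (k+1)))) / β / β^i := by
        have h1 : val β m w = val β (i + (m - i - 1 + 1)) w := by
          rw [show i + (m - i - 1 + 1) = m by omega]
        have h2 : val β (m - i - 1 + 1) (fun k => w (i+k)) =
            ((w i : ℝ) + val β (m - i - 1) (fun k => w (i+(k+1))))/β := rfl
        rw [h1, val_split, h2]
      have ht0 : 0 ≤ val β (m - i - 1) (fun k => w (i + (k+1))) :=
        val_nonneg hβ0 (fun k hk => h0 _ (by omega))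
      have ht1 : val β (m - i - 1) (fun k => w (i + (k+1))) < 1 := by
        apply ih (m - i - 1) (by omega)
        · intro k hk; exact h0 _ (by omega)
        · intro j hj
          have := hadm (i + 1 + j) (by omega)
          have e1 : (fun k => if i+1+j + k < m - (i+1+j) + (i+1+j) then w (i + 1 + j + k) else 0)
              = fun k => if k < m - i - 1 - j then w (i + (j + k + 1)) else 0 := by
            funext k
            rcases lt_or_ge k (m - i - 1 - j) with h' | h'
            · rw [if_pos (by omega), if_pos h']
              congr 1
              omega
            · rw [if_neg (by omega), if_neg (by omega)]
          have e2 : (m : ℕ) - (i+1+j) = m - i - 1 - j := by omega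
          rw [e2] at this
          have e3 : (fun k => if k < m - i - 1 - j then w (i + 1 + j + k) else 0)
              = fun k => if k < m - i - 1 - j then w (i + (j + k + 1)) else 0 := by
            funext k
            rcases lt_or_ge k (m - i - 1 - j) with h' | h'
            · rw [if_pos h', if_pos h']
              congr 1
              omega
            · rw [if_neg (by omega), if_neg (by omega)]
          rw [e3] at this
          exact this
      -- compare with epsStar prefix value
      have hvi : val β i w = val β i (fun k => epsStar β (k+1)) :=
        val_congr (fun k hk => hpre' k hk)
      have hEsucc : val β (i+1) (fun k => epsStar β (k+1)) =
          val β i (fun k => epsStar β (k+1)) + ((epsStar β (i+1) : ℤ):ℝ) / β^(i+1) :=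
        val_succ_last _ _
      have hwi : ((w i : ℝ) + val β (m - i - 1) (fun k => w (i + (k+1)))) < ((epsStar β (i+1) : ℤ):ℝ) := by
        have : (w i : ℝ) + 1 ≤ ((epsStar β (i+1) : ℤ):ℝ) := by exact_mod_cast hi
        linarith
    -- now: val m w = val i E + (stuff)/β^{i+1} < val i E + epsStar(i+1)/β^{i+1} = E(i+1) < 1
      have hpow : (0:ℝ) < β^i := by positivity
      have hlt2 : ((w i : ℝ) + val β (m - i - 1) (fun k => w (i + (k+1)))) / β / β^i
          < ((epsStar β (i+1) : ℤ):ℝ) / β^(i+1) := by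
        rw [pow_succ, div_div, mul_comm (β^i) β, ← div_div, div_div]
        gcongr
      have hE1 := (Estar hβ (i+1)).2
      calc val β m w = val β i (fun k => epsStar β (k+1)) +
            ((w i : ℝ) + val β (m - i - 1) (fun k => w (i + (k+1)))) / β / β^i := by
              rw [hsplit, hvi]
        _ < val β i (fun k => epsStar β (k+1)) + ((epsStar β (i+1) : ℤ):ℝ) / β^(i+1) := by
              linarith
        _ = val β (i+1) (fun k => epsStar β (k+1)) := hEsucc.symm
        _ < 1 := hE1
    · -- equal to the epsStar prefix
      have hall : ∀ k < m, w k = epsStar β (k+1) := by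
        intro k hk
        have hck : (if k < m then w k else 0) = (if k < m then epsStar β (k+1) else 0) := congrFun heq k
        rw [if_pos hk, if_pos hk] at hck
        exact hck
      rw [val_congr hall]
      exact (Estar hβ m).2

lemma digits_of_val {β : ℝ} (hβ : 1 < β) : ∀ (m : ℕ) (w : ℕ → ℤ),
    (∀ j, j ≤ m → 0 ≤ val β (m - j) (fun k => w (j + k)) ∧
      val β (m - j) (fun k => w (j + k)) < 1) →
    ∀ k < m, eps β (val β m w) (k + 1) = w k := by
  have hβ0 : (0:ℝ) < β := lt_trans one_pos hβ
  intro m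
  induction m with
  | zero => intro w _ k hk; omega
  | succ m ih =>
    intro w h k hk
    set y := val β m (fun k => w (k+1)) with hy
    have hy01 : 0 ≤ y ∧ y < 1 := by
      have := h 1 (by omega)
      have e1 : m + 1 - 1 = m := by omega
      rw [e1] at this
      have e2 : val β m (fun k => w (1 + k)) = y := val_congr (fun k _ => by congr 1; omega)
      rw [e2] at this
      exact this
    have hx : val β (m+1) w = ((w 0 : ℝ) + y)/β := rfl
    have hmul : β * val β (m+1) w = (w 0 : ℝ) + y := by
      rw [hx]; field_simp
    have hfloor : ⌊β * val β (m+1) w⌋ = w 0 := by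
      rw [hmul, Int.floor_intCast_add, Int.floor_eq_zero_iff.mpr ⟨hy01.1, hy01.2⟩, add_zero]
    have hT : betaT β (val β (m+1) w) = y := by
      rw [betaT, hfloor, hmul]; ring
    cases k with
    | zero => rw [eps_one_def, hfloor]
    | succ k' =>
      rw [eps_succ, hT]
      have := ih (fun k => w (k+1)) ?_ k' (by omega)
      · exact this
      intro j hj
      have := h (j+1) (by omega)
      have e1 : m + 1 - (j+1) = m - j := by omega
      rw [e1] at this
      have e2 : val β (m - j) (fun k => w (j + 1 + k)) =
          val β (m - j) (fun k => w (j + k + 1)) := val_congr (fun k _ => by congr 1; omega)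
      rw [e2] at this
      exact this

theorem stmt9 (β : ℝ) (hβ : 1 < β) (n : ℕ) (hn : 1 ≤ n) (ω : ℕ → ℤ)
    (hrange : ∀ k < n, 0 ≤ ω k ∧ ω k ≤ ⌈β⌉) :
    isAdmissible β n ω ↔
      ∀ j < n, lexLe (fun k => if j + k < n then ω (j + k) else 0)
        (fun k => if k < n - j then epsStar β (k + 1) else 0) := by
  have hβ0 : (0:ℝ) < β := lt_trans one_pos hβ
  constructor
  · rintro ⟨x, hx, hdig⟩ j hj
    set y := (betaT β)^[j] x with hy
    have hy01 : y ∈ Set.Ico (0:ℝ) 1 := iter_mem' β x hx j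
    have hdy : ∀ k, j + k < n → eps β y (k+1) = ω (j+k) := by
      intro k hk
      rw [hy, eps_shift]
      exact hdig (j+k) hk
    by_cases hall : ∀ k < n - j, ω (j+k) = epsStar β (k+1)
    · right
      funext k
      rcases lt_or_ge k (n - j) with h' | h'
      · rw [if_pos (by omega), if_pos (by omega : k < n - j)]
        exact hall k h'
      · rw [if_neg (by omega), if_neg (by omega)]
    · left
      push_neg at hall
      have hex : ∃ k, k < n - j ∧ ω (j+k) ≠ epsStar β (k+1) := by
        obtain ⟨k, hk1, hk2⟩ := hall
        exact ⟨k, hk1, hk2⟩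
      classical
      obtain ⟨him, hine⟩ := Nat.find_spec hex
      set i := Nat.find hex with hi
      have hmin : ∀ k < i, ω (j+k) = epsStar β (k+1) := by
        intro k hk
        by_contra hc
        exact (Nat.find_min hex hk) ⟨by omega, hc⟩
      refine ⟨i, ?_, ?_⟩
      · intro k hk
        show (if j + k < n then ω (j+k) else 0) = (if k < n - j then epsStar β (k+1) else 0)
        rw [if_pos (by omega), if_pos (by omega)]
        exact hmin k hk
      · show (if j + i < n then ω (j+i) else 0) < (if i < n - j then epsStar β (i+1) else 0)
        rw [if_pos (by omega), if_pos (by omega)]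
        rcases lt_or_ge (ω (j+i)) (epsStar β (i+1)) with hlt | hge
        · exact hlt
        exfalso
        have hge' : epsStar β (i+1) + 1 ≤ ω (j+i) := by omega
        have hexp := expansion hβ0 (i+1) y
        have hT0 : 0 ≤ (betaT β)^[i+1] y := (iter_mem β y i).1
        have hpow : (0:ℝ) < β^(i+1) := by positivity
        have hval : val β (i+1) (fun k => eps β y (k+1)) ≤ y := by
          have : 0 ≤ (betaT β)^[i+1] y / β^(i+1) := by positivity
          linarith [hexp]
        have hsucc : val β (i+1) (fun k => eps β y (k+1)) =
            val β i (fun k => eps β y (k+1)) + ((eps β y (i+1) : ℤ):ℝ)/β^(i+1) :=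
          val_succ_last _ _
        have hvi : val β i (fun k => eps β y (k+1)) = val β i (fun k => epsStar β (k+1)) :=
          val_congr (fun k hk => by rw [hdy k (by omega), hmin k hk])
        have hdyi : ((eps β y (i+1) : ℤ):ℝ) = ((ω (j+i) : ℤ):ℝ) := by
          exact_mod_cast hdy i (by omega)
        have hEs := (Estar hβ (i+1)).1
        have hEsucc : val β (i+1) (fun k => epsStar β (k+1)) =
            val β i (fun k => epsStar β (k+1)) + ((epsStar β (i+1) : ℤ):ℝ)/β^(i+1) :=
          val_succ_last _ _
        have hcast : ((epsStar β (i+1) : ℤ):ℝ) + 1 ≤ ((ω (j+i) : ℤ):ℝ) := by exact_mod_cast hge'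
        have hstep : ((epsStar β (i+1):ℤ):ℝ)/β^(i+1) + 1/β^(i+1) ≤ ((ω (j+i):ℤ):ℝ)/β^(i+1) := by
          rw [← add_div]
          gcongr
        have hy1 : (1:ℝ) ≤ y := by
          rw [hdyi] at hsucc
          linarith [hEs, hvi, hsucc, hval, hEsucc, hstep]
        exact absurd hy1 (not_le.mpr hy01.2)
  · intro hyp
    have hsuf : ∀ j, j ≤ n → 0 ≤ val β (n - j) (fun k => ω (j + k)) ∧
        val β (n - j) (fun k => ω (j + k)) < 1 := by
      intro j hj
      constructor
      · exact val_nonneg hβ0 (fun k hk => (hrange (j+k) (by omega)).1)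
      · apply lemmaA hβ (n - j) (fun k => ω (j+k))
        · intro k hk; exact (hrange (j+k) (by omega)).1
        · intro j' hj'
          have hthis := hyp (j + j') (by omega)
          have e1 : (fun k => if j + j' + k < n then ω (j + j' + k) else 0)
              = fun k => if k < n - j - j' then (fun k => ω (j+k)) (j' + k) else 0 := by
            funext k
            rcases lt_or_ge k (n - j - j') with h' | h'
            · rw [if_pos (by omega), if_pos h']
              show ω (j + j' + k) = ω (j + (j' + k))
              congr 1
              omega
            · rw [if_neg (by omega), if_neg (by omega)]
          have e2 : n - (j + j') = n - j - j' := by omega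
          rw [e1, e2] at hthis
          exact hthis
    refine ⟨val β n ω, ?_, ?_⟩
    · have h00 := hsuf 0 (by omega)
      have e : val β (n - 0) (fun k => ω (0 + k)) = val β n ω := by
        rw [Nat.sub_zero]
        exact val_congr (fun k _ => by rw [Nat.zero_add])
      rw [e] at h00
      exact ⟨h00.1, h00.2⟩
    · exact digits_of_val hβ n ω hsuf
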